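/- Fix x ∈ (0,1). Then (Γ(2m)/Γ(m)²)·∫_0^x t^{m−1}·(1−t)^{m−1} dt tends to 1/2 as m tends to 0 from the right. -/

import Mathlib

open Real Filter

lemma aux_int_rpow {m x : ℝ} (hm : -1 < m) (hm' : m + 1 ≠ 0) :
    ∫ t in (0 : ℝ)..x, t ^ m = x ^ (m + 1) / (m + 1) := by
  rw [integral_rpow (Or.inl hm), Real.zero_rpow hm', sub_zero]

/-- For fixed `x ∈ (0,1)`, the regularized incomplete beta function `B_{m,m}(x)` tends to
`1/2` as `m → 0⁺`. -/
theorem stmt_10 (x : ℝ) (hx : x ∈ Set.Ioo (0 : ℝ) 1) :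
    Tendsto (fun m : ℝ =>
        Real.Gamma (2 * m) / (Real.Gamma m) ^ 2 *
          ∫ t in (0 : ℝ)..x, t ^ (m - 1) * (1 - t) ^ (m - 1))
      (nhdsWithin 0 (Set.Ioi 0)) (nhds (1 / 2)) := by
  obtain ⟨hx0, hx1⟩ := hx
  have h1x : 0 < 1 - x := by linarith
  set I : ℝ → ℝ := fun m => ∫ t in (0 : ℝ)..x, t ^ (m - 1) * (1 - t) ^ (m - 1) with hI
  set G : ℝ → ℝ := fun m => Real.Gamma (2 * m + 1) / (2 * Real.Gamma (m + 1) ^ 2) with hGdef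
  -- continuity of `m ↦ x ^ m` at `0`
  have hxm : Tendsto (fun m : ℝ => x ^ m) (nhdsWithin 0 (Set.Ioi 0)) (nhds 1) := by
    have hc : ContinuousAt (fun m : ℝ => x ^ m) 0 := by
      have : (fun m : ℝ => x ^ m) = fun m => Real.exp (Real.log x * m) := by
        funext m; rw [Real.rpow_def_of_pos hx0]
      rw [this]
      fun_prop
    have h : Tendsto (fun m : ℝ => x ^ m) (nhdsWithin 0 (Set.Ioi 0)) (nhds (x ^ (0:ℝ))) :=
      hc.tendsto.mono_left nhdsWithin_le_nhds
    simpa using h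
  -- G tends to 1/2
  have hG : Tendsto G (nhdsWithin 0 (Set.Ioi 0)) (nhds (1 / 2)) := by
    have h1 : ContinuousAt Real.Gamma 1 := by
      refine (Real.differentiableAt_Gamma ?_).continuousAt
      intro n h
      have h2 : (0:ℝ) ≤ (n:ℝ) := n.cast_nonneg
      have h3 : ((n:ℝ)) = -1 := by linarith
      linarith
    have h2 : ContinuousAt (fun m : ℝ => Real.Gamma (2 * m + 1)) 0 := by
      have h1' : ContinuousAt Real.Gamma (2 * (0:ℝ) + 1) := by
        rw [show 2 * (0:ℝ) + 1 = 1 by norm_num]; exact h1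
      exact ContinuousAt.comp (g := Real.Gamma) (f := fun m : ℝ => 2 * m + 1) (x := (0:ℝ))
        h1' (by fun_prop)
    have h3 : ContinuousAt (fun m : ℝ => Real.Gamma (m + 1)) 0 := by
      have h1' : ContinuousAt Real.Gamma ((0:ℝ) + 1) := by
        rw [show (0:ℝ) + 1 = 1 by norm_num]; exact h1
      exact ContinuousAt.comp (g := Real.Gamma) (f := fun m : ℝ => m + 1) (x := (0:ℝ))
        h1' (by fun_prop)
    have hc : ContinuousAt G 0 := by
      refine h2.div ((continuousAt_const).mul (h3.pow 2)) ?_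
      simp [Real.Gamma_one]
    have h : Tendsto G (nhdsWithin 0 (Set.Ioi 0)) (nhds (G 0)) :=
      hc.tendsto.mono_left nhdsWithin_le_nhds
    have hG0 : G 0 = 1 / 2 := by simp [hGdef, Real.Gamma_one]
    rwa [hG0] at h
  -- m * I m tends to 1
  have hMI : Tendsto (fun m => m * I m) (nhdsWithin 0 (Set.Ioi 0)) (nhds 1) := by
    have hmem : Set.Ioo (0:ℝ) 1 ∈ nhdsWithin (0:ℝ) (Set.Ioi 0) :=
      Ioo_mem_nhdsGT_of_mem ⟨le_refl 0, one_pos⟩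
    -- bounds, for m ∈ (0,1)
    have key : ∀ m ∈ Set.Ioo (0:ℝ) 1,
        x ^ m ≤ m * I m ∧ m * I m ≤ x ^ m + m * (x ^ m * x / ((m + 1) * (1 - x))) := by
      intro m hm
      obtain ⟨hm0, hm1⟩ := hm
      have hm1' : (-1:ℝ) < m - 1 := by linarith
      have hg : IntervalIntegrable (fun t : ℝ => t ^ (m - 1)) MeasureTheory.volume 0 x :=
        intervalIntegral.intervalIntegrable_rpow' hm1'
      have hg2 : IntervalIntegrable (fun t : ℝ => t ^ m) MeasureTheory.volume 0 x :=
        intervalIntegral.intervalIntegrable_rpow' (by linarith)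
      have hcont : ContinuousOn (fun t : ℝ => (1 - t) ^ (m - 1)) (Set.uIcc 0 x) := by
        apply ContinuousOn.rpow_const
        · fun_prop
        · intro t ht
          rw [Set.uIcc_of_le hx0.le] at ht
          left
          have : t ≤ x := ht.2
          intro h; nlinarith [h]
      have hf : IntervalIntegrable (fun t : ℝ => t ^ (m - 1) * (1 - t) ^ (m - 1))
          MeasureTheory.volume 0 x := hg.mul_continuousOn hcont
      have hu : IntervalIntegrable (fun t : ℝ => t ^ (m - 1) + t ^ m / (1 - x))
          MeasureTheory.volume 0 x := hg.add (hg2.div_const _)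
      constructor
      · -- lower bound
        have hpt : ∀ t ∈ Set.Icc (0:ℝ) x,
            t ^ (m - 1) ≤ t ^ (m - 1) * (1 - t) ^ (m - 1) := by
          intro t ht
          have h1t : 0 < 1 - t := by nlinarith [ht.2]
          have h1 : 1 ≤ (1 - t) ^ (m - 1) :=
            Real.one_le_rpow_of_pos_of_le_one_of_nonpos h1t (by linarith [ht.1]) (by linarith)
          exact le_mul_of_one_le_right (Real.rpow_nonneg ht.1 _) h1
        have hmono := intervalIntegral.integral_mono_on hx0.le hg hf hpt
        rw [show ∫ t in (0:ℝ)..x, t ^ (m-1) = x ^ m / m by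
            simpa [show m - 1 + 1 = m by ring] using
              aux_int_rpow (x := x) hm1' (by rw [show m - 1 + 1 = m by ring]; positivity)] at hmono
        calc x ^ m = m * (x ^ m / m) := by field_simp
        _ ≤ m * I m := mul_le_mul_of_nonneg_left hmono hm0.le
      · -- upper bound
        have hle : I m ≤ x ^ m / m + x ^ m * x / ((m + 1) * (1 - x)) := by
          have hpt : ∀ t ∈ Set.Icc (0:ℝ) x, t ^ (m - 1) * (1 - t) ^ (m - 1) ≤
              t ^ (m - 1) + t ^ m / (1 - x) := by
            intro t ht
            rcases eq_or_lt_of_le ht.1 with h0 | h0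
            · rw [← h0]
              rw [Real.zero_rpow (by intro h; rw [sub_eq_zero] at h; linarith),
                Real.zero_rpow hm0.ne']
              norm_num
            · have h1t : 0 < 1 - t := by nlinarith [ht.2]
              have hb1 : (1 - t) ^ (m - 1) ≤ (1 - t) ^ (-1 : ℝ) :=
                Real.rpow_le_rpow_of_exponent_ge h1t (by linarith [ht.1]) (by linarith)
              have hb2 : (1 - t) ^ (-1 : ℝ) ≤ 1 + t / (1 - x) := by
                rw [Real.rpow_neg_one]
                rw [inv_le_iff_one_le_mul₀ h1t]
                have ht' : t / (1 - t) ≤ t / (1 - x) := by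
                  gcongr <;> linarith [ht.2]
                have he : (1 + t / (1 - t)) * (1 - t) = 1 := by field_simp; ring
                nlinarith [mul_le_mul_of_nonneg_right (add_le_add_left ht' 1) h1t.le]
              have htm : (0:ℝ) ≤ t ^ (m - 1) := Real.rpow_nonneg ht.1 _
              calc t ^ (m - 1) * (1 - t) ^ (m - 1)
                  ≤ t ^ (m - 1) * (1 + t / (1 - x)) :=
                    mul_le_mul_of_nonneg_left (hb1.trans hb2) htm
                _ = t ^ (m - 1) + t ^ (m - 1) * t / (1 - x) := by ring
                _ = t ^ (m - 1) + t ^ m / (1 - x) := by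
                    rw [show m = m - 1 + 1 by ring, Real.rpow_add_one h0.ne']
                    ring_nf
          have hmono := intervalIntegral.integral_mono_on hx0.le hf hu hpt
          have e1 : ∫ t in (0:ℝ)..x, (t ^ (m - 1) + t ^ m / (1 - x)) =
                x ^ m / m + x ^ m * x / ((m + 1) * (1 - x)) := by
              rw [intervalIntegral.integral_add hg (hg2.div_const _),
                intervalIntegral.integral_div,
                aux_int_rpow hm1' (by rw [show m - 1 + 1 = m by ring]; positivity),
                aux_int_rpow (by linarith : (-1:ℝ) < m) (by positivity)]
              rw [show m - 1 + 1 = m by ring, Real.rpow_add_one hx0.ne' m]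
              field_simp
              try ring
          rw [e1] at hmono; exact hmono
        calc m * I m ≤ m * (x ^ m / m + x ^ m * x / ((m + 1) * (1 - x))) :=
              mul_le_mul_of_nonneg_left hle hm0.le
          _ = x ^ m + m * (x ^ m * x / ((m + 1) * (1 - x))) := by field_simp
    -- squeeze
    have hzero : Tendsto (fun m : ℝ => m) (nhdsWithin 0 (Set.Ioi 0)) (nhds 0) :=
      tendsto_id.mono_left nhdsWithin_le_nhds
    have hupp : Tendsto (fun m : ℝ => x ^ m + m * (x ^ m * x / ((m + 1) * (1 - x))))
        (nhdsWithin 0 (Set.Ioi 0)) (nhds 1) := by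
      have h2 : Tendsto (fun m : ℝ => m * (x ^ m * x / ((m + 1) * (1 - x))))
          (nhdsWithin 0 (Set.Ioi 0)) (nhds (0 * (1 * x / ((0 + 1) * (1 - x))))) := by
        apply hzero.mul
        apply Tendsto.div ((hxm.mul tendsto_const_nhds))
          (((hzero.add tendsto_const_nhds)).mul tendsto_const_nhds)
        positivity
      have h3 := hxm.add h2
      norm_num at h3
      first
      | exact h3
      | · convert h3 using 2
          norm_num
    refine tendsto_of_tendsto_of_tendsto_of_le_of_le' hxm hupp ?_ ?_
    · filter_upwards [hmem] with m hm using (key m hm).1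
    · filter_upwards [hmem] with m hm using (key m hm).2
  -- combine
  have hfin := hG.mul hMI
  rw [mul_one] at hfin
  refine hfin.congr' ?_
  filter_upwards [self_mem_nhdsWithin] with m (hm : 0 < m)
  have hΓm : Real.Gamma (m + 1) = m * Real.Gamma m := Real.Gamma_add_one hm.ne'
  have hΓ2m : Real.Gamma (2 * m + 1) = 2 * m * Real.Gamma (2 * m) :=
    Real.Gamma_add_one (by positivity)
  have hΓpos : 0 < Real.Gamma m := Real.Gamma_pos_of_pos hm
  simp only [hGdef, hΓm, hΓ2m]
  field_simp
  ring
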